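/- Let a ≥ 0 and b ≥ 0 be integers and let Ψ ∈ ℂ[α_1,…,α_n] be a nonzero homogeneous polynomial of degree b. Then the linear map D : S_{a+b} → S_a from homogeneous forms of degree a+b to homogeneous forms of degree a, given by F ↦ Ψ∘F, is surjective. -/

import Mathlib

open MvPolynomial

/-- The iterated partial derivative `∂^m` applied to `F`: on a monomial `x^k` it gives
`(∏ᵢ kᵢ(kᵢ-1)⋯(kᵢ-mᵢ+1)) · x^(k-m)`, i.e. each dual variable `αᵢ` acts as `∂/∂xᵢ`. -/
noncomputable def mderiv {σ : Type*} (m : σ →₀ ℕ) (F : MvPolynomial σ ℂ) :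
    MvPolynomial σ ℂ :=
  Finsupp.sum (AddMonoidAlgebra.coeff F) fun k c =>
    MvPolynomial.monomial (k - m) (c * ∏ i ∈ m.support, (Nat.descFactorial (k i) (m i) : ℂ))

/-- The apolarity action `Θ ∘ F` of a polynomial `Θ` in the dual variables on `F`,
as a constant-coefficient differential operator. -/
noncomputable def diffOp {σ : Type*} (Θ F : MvPolynomial σ ℂ) : MvPolynomial σ ℂ :=
  Finsupp.sum (AddMonoidAlgebra.coeff Θ) fun m c => c • mderiv m F

/-- Apolar length `al F`: the dimension of the space `Diff(F) = {Θ ∘ F : Θ ∈ T}` of all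
partial derivatives of `F` of all orders (including `F` itself). -/
noncomputable def apolarLength {σ : Type*} (F : MvPolynomial σ ℂ) : ℕ :=
  Module.finrank ℂ (Submodule.span ℂ (Set.range fun Θ => diffOp Θ F))

/-- The Hilbert function of the apolar algebra of `F`: the dimension of the span of the
`i`-th order partial derivatives `{Θ ∘ F : Θ homogeneous of degree i}`. -/
noncomputable def hilbFn {σ : Type*} (F : MvPolynomial σ ℂ) (i : ℕ) : ℕ :=
  Module.finrank ℂ (Submodule.span ℂ
    {G : MvPolynomial σ ℂ | ∃ Θ : MvPolynomial σ ℂ, Θ.IsHomogeneous i ∧ diffOp Θ F = G})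

/-- Waring rank of a degree-`d` form: the least `r` such that
`F = c₁ ℓ₁^d + ⋯ + c_r ℓ_r^d` for linear forms `ℓᵢ` and scalars `cᵢ ∈ ℂ`. -/
noncomputable def waringRank {σ : Type*} [Fintype σ] (d : ℕ) (F : MvPolynomial σ ℂ) : ℕ :=
  sInf {r : ℕ | ∃ (c : Fin r → ℂ) (v : Fin r → σ → ℂ),
    F = ∑ i, c i • (∑ j, v i j • MvPolynomial.X j) ^ d}

section Aux
variable {σ : Type*}

lemma mderiv_monomial (m k : σ →₀ ℕ) (c : ℂ) :
    mderiv m (monomial k c) =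
      monomial (k - m) (c * ∏ i ∈ m.support, (Nat.descFactorial (k i) (m i) : ℂ)) := by
  unfold mderiv
  exact sum_monomial_eq (b := fun k c => MvPolynomial.monomial (k - m)
    (c * ∏ i ∈ m.support, (Nat.descFactorial (k i) (m i) : ℂ))) (by simp)

lemma mderiv_zero (m : σ →₀ ℕ) : mderiv m (0 : MvPolynomial σ ℂ) = 0 := by
  unfold mderiv
  rw [AddMonoidAlgebra.coeff_zero]
  exact Finsupp.sum_zero_index

lemma mderiv_add (m : σ →₀ ℕ) (F G : MvPolynomial σ ℂ) :
    mderiv m (F + G) = mderiv m F + mderiv m G := by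
  unfold mderiv
  rw [AddMonoidAlgebra.coeff_add]
  exact Finsupp.sum_add_index' (fun k => by simp) (fun k c₁ c₂ => by rw [add_mul, map_add])

lemma mderiv_smul (m : σ →₀ ℕ) (c : ℂ) (F : MvPolynomial σ ℂ) :
    mderiv m (c • F) = c • mderiv m F := by
  unfold mderiv
  rw [AddMonoidAlgebra.coeff_smul, Finsupp.sum_smul_index (fun k => by simp), Finsupp.smul_sum]
  refine Finset.sum_congr rfl fun k _ => ?_
  simp only [smul_eq_mul, ← map_smul, smul_eq_mul]
  ring_nf

lemma mderiv_finsum {α : Type*} (m : σ →₀ ℕ) (s : Finset α) (f : α → MvPolynomial σ ℂ) :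
    mderiv m (∑ i ∈ s, f i) = ∑ i ∈ s, mderiv m (f i) := by
  classical
  induction s using Finset.induction_on with
  | empty => simp [mderiv_zero]
  | insert _ _ h ih => rw [Finset.sum_insert h, Finset.sum_insert h, mderiv_add, ih]

lemma diffOp_monomial (m : σ →₀ ℕ) (c : ℂ) (F : MvPolynomial σ ℂ) :
    diffOp (monomial m c) F = c • mderiv m F := by
  unfold diffOp
  exact sum_monomial_eq (b := fun m c => c • mderiv m F) (by simp)

lemma diffOp_add_right (Θ F G : MvPolynomial σ ℂ) :
    diffOp Θ (F + G) = diffOp Θ F + diffOp Θ G := by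
  unfold diffOp
  rw [← Finsupp.sum_add]
  exact Finsupp.sum_congr fun m _ => by rw [mderiv_add, smul_add]

lemma diffOp_smul_right (Θ : MvPolynomial σ ℂ) (c : ℂ) (F : MvPolynomial σ ℂ) :
    diffOp Θ (c • F) = c • diffOp Θ F := by
  unfold diffOp
  rw [Finsupp.smul_sum]
  exact Finsupp.sum_congr fun m _ => by rw [mderiv_smul, smul_comm]

lemma diffOp_add_left (Θ₁ Θ₂ F : MvPolynomial σ ℂ) :
    diffOp (Θ₁ + Θ₂) F = diffOp Θ₁ F + diffOp Θ₂ F := by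
  unfold diffOp
  rw [AddMonoidAlgebra.coeff_add]
  exact Finsupp.sum_add_index' (fun m => by simp) (fun m c₁ c₂ => add_smul c₁ c₂ _)

lemma Nat.descFactorial_add_eq (n p q : ℕ) :
    n.descFactorial (p + q) = n.descFactorial q * (n - q).descFactorial p := by
  induction p with
  | zero => simp
  | succ p ih =>
      rw [show p + 1 + q = (p + q) + 1 from by omega, Nat.descFactorial_succ,
        Nat.descFactorial_succ, ih, Nat.sub_sub]
      ring_nf

lemma prod_descFactorial_extend (k m : σ →₀ ℕ) (s : Finset σ) (hs : m.support ⊆ s) :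
    ∏ i ∈ s, (Nat.descFactorial (k i) (m i) : ℂ) =
      ∏ i ∈ m.support, (Nat.descFactorial (k i) (m i) : ℂ) := by
  refine (Finset.prod_subset hs fun i _ hi => ?_).symm
  rw [Finsupp.notMem_support_iff.mp hi]
  simp

lemma mderiv_mderiv_monomial (m m' k : σ →₀ ℕ) (c : ℂ) :
    mderiv m (mderiv m' (monomial k c)) = mderiv (m + m') (monomial k c) := by
  classical
  rw [mderiv_monomial, mderiv_monomial, mderiv_monomial]
  have hexp : k - m' - m = k - (m + m') := by rw [tsub_tsub, add_comm]
  rw [hexp]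
  congr 1
  rw [mul_assoc]
  congr 1
  set s : Finset σ := m.support ∪ m'.support ∪ (m + m').support with hs
  have h1 : m'.support ⊆ s := Finset.subset_union_right.trans Finset.subset_union_left
  have h2 : m.support ⊆ s := Finset.subset_union_left.trans Finset.subset_union_left
  have h3 : (m + m').support ⊆ s := Finset.subset_union_right
  rw [← prod_descFactorial_extend k m' s h1, ← prod_descFactorial_extend (k - m') m s h2,
    ← prod_descFactorial_extend k (m + m') s h3, ← Finset.prod_mul_distrib]
  refine Finset.prod_congr rfl fun i _ => ?_
  rw [Finsupp.add_apply, Finsupp.tsub_apply, ← Nat.cast_mul, ← Nat.descFactorial_add_eq]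

lemma mderiv_mderiv (m m' : σ →₀ ℕ) (F : MvPolynomial σ ℂ) :
    mderiv m (mderiv m' F) = mderiv (m + m') F := by
  rw [F.as_sum, mderiv_finsum, mderiv_finsum, mderiv_finsum]
  exact Finset.sum_congr rfl fun k _ => mderiv_mderiv_monomial m m' k _

lemma diffOp_mul (Θ Ψ F : MvPolynomial σ ℂ) :
    diffOp (Θ * Ψ) F = diffOp Θ (diffOp Ψ F) := by
  induction Θ using MvPolynomial.induction_on' with
  | add p q hp hq => rw [add_mul, diffOp_add_left, diffOp_add_left, hp, hq]
  | monomial u a =>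
    induction Ψ using MvPolynomial.induction_on' with
    | add p q hp hq =>
        rw [mul_add, diffOp_add_left, diffOp_add_left, diffOp_add_right, hp, hq]
    | monomial v b =>
        rw [monomial_mul, diffOp_monomial, diffOp_monomial, diffOp_monomial, mderiv_smul,
          mderiv_mderiv, mul_smul]

lemma diffOp_smul_left (c : ℂ) (Θ F : MvPolynomial σ ℂ) :
    diffOp (c • Θ) F = c • diffOp Θ F := by
  unfold diffOp
  rw [AddMonoidAlgebra.coeff_smul, Finsupp.sum_smul_index (fun m => by simp), Finsupp.smul_sum]
  exact Finset.sum_congr rfl fun m _ => mul_smul c _ _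

lemma degree_add' (x y : σ →₀ ℕ) : (x + y).degree = x.degree + y.degree := by
  rw [Finsupp.degree_eq_weight_one, map_add]

lemma eq_of_le_of_degree_eq {m k : σ →₀ ℕ} (h : m ≤ k) (hd : m.degree = k.degree) :
    m = k := by
  have hk : m + (k - m) = k := add_tsub_cancel_of_le h
  have : (k - m).degree = 0 := by
    have := degree_add' m (k - m)
    rw [hk] at this
    omega
  rw [Finsupp.degree_eq_zero_iff] at this
  rw [← hk, this, add_zero]

lemma hom_support_degree {P : MvPolynomial σ ℂ} {d : ℕ} (hP : P.IsHomogeneous d)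
    {k : σ →₀ ℕ} (hk : k ∈ P.support) : k.degree = d := by
  rw [Finsupp.degree_eq_weight_one]
  exact hP (mem_support_iff.mp hk)

lemma diffOp_mem {a b : ℕ} {Ψ F : MvPolynomial σ ℂ} (hΨ : Ψ.IsHomogeneous b)
    (hF : F.IsHomogeneous (a + b)) :
    diffOp Ψ F ∈ homogeneousSubmodule σ ℂ a := by
  rw [diffOp, sum_def]
  refine Submodule.sum_mem _ fun m hm => Submodule.smul_mem _ _ ?_
  rw [mderiv, sum_def]
  refine Submodule.sum_mem _ fun k hk => ?_
  rcases eq_or_ne (coeff k F * ∏ i ∈ m.support, (Nat.descFactorial (k i) (m i) : ℂ)) 0 with h0 | h0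
  · rw [h0, map_zero]; exact Submodule.zero_mem _
  · rw [mem_homogeneousSubmodule]
    refine isHomogeneous_monomial _ ?_
    have hprod : ∀ i, m i ≤ k i := by
      intro i
      by_cases hi : i ∈ m.support
      · by_contra hlt
        have : (Nat.descFactorial (k i) (m i) : ℂ) = 0 := by
          rw [Nat.descFactorial_eq_zero_iff_lt.mpr (by omega), Nat.cast_zero]
        exact h0 (by rw [mul_eq_zero]; right; exact Finset.prod_eq_zero hi this)
      · rw [Finsupp.notMem_support_iff.mp hi]; exact Nat.zero_le _
    have hle : m ≤ k := Finsupp.le_def.mpr hprod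
    have hk' : (k : σ →₀ ℕ).degree = a + b := hom_support_degree hF hk
    have hm' : (m : σ →₀ ℕ).degree = b := hom_support_degree hΨ hm
    have := degree_add' m (k - m)
    rw [add_tsub_cancel_of_le hle] at this
    omega

lemma pair_ne_zero {P : MvPolynomial σ ℂ} {d : ℕ} (hP : P.IsHomogeneous d)
    {m : σ →₀ ℕ} (hm : m ∈ P.support) : coeff 0 (diffOp P (monomial m 1)) ≠ 0 := by
  classical
  rw [diffOp, sum_def]
  simp only [mderiv_monomial, one_mul]
  rw [coeff_sum]
  simp only [coeff_smul, coeff_monomial]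
  rw [Finset.sum_eq_single m]
  · simp only [tsub_self, if_pos rfl, smul_eq_mul]
    refine mul_ne_zero (mem_support_iff.mp hm) ?_
    refine Finset.prod_ne_zero_iff.mpr fun i _ => ?_
    rw [Nat.descFactorial_self]
    exact_mod_cast (Nat.factorial_ne_zero _)
  · intro k hk hne
    rw [if_neg, smul_zero]
    intro hmk
    have hle : m ≤ k := tsub_eq_zero_iff_le.mp hmk
    exact hne (eq_of_le_of_degree_eq hle
      (by rw [hom_support_degree hP hm, hom_support_degree hP hk])).symm
  · intro h
    exact absurd h (by simpa using hm)

end Aux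

/-- For a nonzero homogeneous `Ψ` of degree `b` in the dual variables, the map
`F ↦ Ψ∘F` from forms of degree `a + b` to forms of degree `a` is surjective. -/
theorem stmt7 (n a b : ℕ) (Ψ : MvPolynomial (Fin n) ℂ) (hΨ : Ψ ≠ 0)
    (hΨb : Ψ.IsHomogeneous b) :
    ∀ G : MvPolynomial (Fin n) ℂ, G.IsHomogeneous a →
      ∃ F : MvPolynomial (Fin n) ℂ, F.IsHomogeneous (a + b) ∧ diffOp Ψ F = G := by
  classical
  set V := homogeneousSubmodule (Fin n) ℂ (a + b) with hV
  set W := homogeneousSubmodule (Fin n) ℂ a with hW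
  haveI : FiniteDimensional ℂ W := Submodule.finiteDimensional_of_le
    (S₂ := restrictTotalDegree (Fin n) ℂ a)
    (fun p hp => (mem_restrictTotalDegree _ _ _).mpr
      (IsHomogeneous.totalDegree_le hp))
  -- the map D : V → W
  let D : V →ₗ[ℂ] W :=
    { toFun := fun F => ⟨diffOp Ψ F.1, diffOp_mem hΨb F.2⟩
      map_add' := fun F G => Subtype.ext (diffOp_add_right _ _ _)
      map_smul' := fun c F => Subtype.ext (diffOp_smul_right _ _ _) }
  -- the pairing map L : W → W*
  let L : W →ₗ[ℂ] Module.Dual ℂ W :=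
    { toFun := fun Θ =>
        { toFun := fun G => coeff 0 (diffOp Θ.1 G.1)
          map_add' := fun G₁ G₂ => by rw [← coeff_add, ← diffOp_add_right]; rfl
          map_smul' := fun c G => by
            simp only [RingHom.id_apply, ← coeff_smul, ← diffOp_smul_right]; rfl }
      map_add' := fun Θ₁ Θ₂ => by
        ext G; simp only [LinearMap.coe_mk, AddHom.coe_mk, LinearMap.add_apply]
        rw [← coeff_add, ← diffOp_add_left]; rfl
      map_smul' := fun c Θ => by
        ext G
        show coeff 0 (diffOp (c • Θ.1) G.1) = c • coeff 0 (diffOp Θ.1 G.1)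
        rw [diffOp_smul_left, coeff_smul] }
  have hLinj : Function.Injective L := by
    rw [← LinearMap.ker_eq_bot, LinearMap.ker_eq_bot']
    intro Θ hΘ
    by_contra hne
    have hΘ0 : Θ.1 ≠ 0 := fun h => hne (Subtype.ext h)
    obtain ⟨m, hm⟩ := (support_nonempty.mpr hΘ0)
    have hmdeg : Finsupp.degree m = a := hom_support_degree Θ.2 hm
    have hGmem : (monomial m 1 : MvPolynomial (Fin n) ℂ) ∈ W :=
      isHomogeneous_monomial _ hmdeg
    have := congrFun (congrArg DFunLike.coe hΘ) ⟨monomial m 1, hGmem⟩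
    exact pair_ne_zero Θ.2 hm (by simpa [L] using this)
  have hLsurj : Function.Surjective L :=
    (LinearMap.injective_iff_surjective_of_finrank_eq_finrank
      (Subspace.dual_finrank_eq (K := ℂ) (V := W)).symm).mp hLinj
  have hDsurj : Function.Surjective D := by
    rw [← LinearMap.dualMap_injective_iff]
    rw [← LinearMap.ker_eq_bot, LinearMap.ker_eq_bot']
    intro φ hφ
    obtain ⟨Θ, rfl⟩ := hLsurj φ
    suffices h : Θ = 0 by rw [h, map_zero]
    by_contra hne
    have hΘ0 : Θ.1 ≠ 0 := fun h => hne (Subtype.ext h)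
    have hmul0 : Θ.1 * Ψ ≠ 0 := mul_ne_zero hΘ0 hΨ
    have hmulhom : (Θ.1 * Ψ).IsHomogeneous (a + b) :=
      (Θ.2 : (Θ : MvPolynomial (Fin n) ℂ).IsHomogeneous a).mul hΨb
    obtain ⟨m, hm⟩ := (support_nonempty.mpr hmul0)
    have hFmem : (monomial m 1 : MvPolynomial (Fin n) ℂ) ∈ V :=
      isHomogeneous_monomial _ (hom_support_degree hmulhom hm)
    have h0 := congrFun (congrArg DFunLike.coe hφ) ⟨monomial m 1, hFmem⟩
    have : coeff 0 (diffOp (Θ.1 * Ψ) (monomial m 1)) = 0 := by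
      rw [diffOp_mul]
      simpa [D, L, LinearMap.dualMap_apply] using h0
    exact pair_ne_zero hmulhom hm this
  intro G hG
  obtain ⟨F, hF⟩ := hDsurj ⟨G, hG⟩
  exact ⟨F.1, F.2, congrArg Subtype.val hF⟩
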